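/- For every smooth anisotropic vector field 𝒳 : A → ℝⁿ, every (p,v) ∈ A and all e, h ∈ ℝⁿ, the fiber derivative of the covariant derivative satisfies d/dt|_{t=0} ∇^{(p,v+th)}_e 𝒳 = P_{(p,v)}(e, 𝒳(p,v), h) + (∇_e(∂̇𝒳))_{(p,v)}(h) − (∂̇𝒳)_{(p,v)}(P_{(p,v)}(e,v,h)), where (∇_e(∂̇𝒳))_{(p,v)}(h) := ∇^{(p,v)}_e[(q,u) ↦ (∂̇𝒳)_{(q,u)}(h)] − (∂̇𝒳)_{(p,v)}(Γ_{(p,v)}(e,h)) is the covariant derivative of the (1,1)-anisotropic tensor ∂̇𝒳. -/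

import Mathlib

/-- A pseudo-Finsler metric in a chart: an open set `Ω ⊆ E`, an open set
`A ⊆ Ω × (E ∖ {0})` with conic fibers, a smooth positively `2`-homogeneous `L` on `A`
and its fundamental tensor `g`, given by the second fiber derivative of `L`, required
to be symmetric and nondegenerate at every point of `A`. -/
structure PseudoFinslerChart (E : Type*) [NormedAddCommGroup E] [NormedSpace ℝ E] where
  Ω : Set E
  A : Set (E × E)
  L : E × E → ℝ
  g : E × E → E →ₗ[ℝ] E →ₗ[ℝ] ℝ
  Ω_open : IsOpen Ω
  A_open : IsOpen A
  A_sub : ∀ pv ∈ A, pv.1 ∈ Ω ∧ pv.2 ≠ 0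
  A_cone : ∀ pv ∈ A, ∀ c : ℝ, 0 < c → (pv.1, c • pv.2) ∈ A
  L_smooth : ContDiffOn ℝ (⊤ : ℕ∞) L A
  L_homog : ∀ pv ∈ A, ∀ c : ℝ, 0 < c → L (pv.1, c • pv.2) = c ^ 2 * L pv
  g_def : ∀ pv ∈ A, ∀ e h : E,
    g pv e h = (1 / 2) * deriv (fun s : ℝ =>
      deriv (fun t : ℝ => L (pv.1, pv.2 + s • e + t • h)) 0) 0
  g_symm : ∀ pv ∈ A, ∀ e h : E, g pv e h = g pv h e
  g_nondeg : ∀ pv ∈ A, ∀ e : E, (∀ h : E, g pv e h = 0) → e = 0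

/-- The Cartan tensor of a pseudo-Finsler metric in a chart. -/
noncomputable def PseudoFinslerChart.Cartan {E : Type*} [NormedAddCommGroup E]
    [NormedSpace ℝ E] (F : PseudoFinslerChart E) (pv : E × E) (b e h : E) : ℝ :=
  (1 / 4) * deriv (fun r : ℝ => deriv (fun s : ℝ =>
    deriv (fun t : ℝ => F.L (pv.1, pv.2 + r • b + s • e + t • h)) 0) 0) 0

/-- The fiber derivative `(∂̇𝒳)_{(p,v)}(h) = d/dt|₀ 𝒳(p, v + t h)` of an anisotropic
vector field. -/
noncomputable def fiberDeriv {E : Type*} [NormedAddCommGroup E] [NormedSpace ℝ E]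
    (𝒳 : E × E → E) (pv : E × E) (h : E) : E :=
  deriv (fun t : ℝ => 𝒳 (pv.1, pv.2 + t • h)) 0

/-- The covariant derivative `∇^{(p,v)}_e 𝒳` of an anisotropic vector field with respect
to an anisotropic connection `Γ`. -/
noncomputable def covDeriv {E : Type*} [NormedAddCommGroup E] [NormedSpace ℝ E]
    (Γ : E × E → E →ₗ[ℝ] E →ₗ[ℝ] E) (𝒳 : E × E → E) (pv : E × E) (e : E) : E :=
  fderiv ℝ (fun q => 𝒳 (q, pv.2)) pv.1 e + Γ pv e (𝒳 pv)
    - fiberDeriv 𝒳 pv (Γ pv e pv.2)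

/-- The vertical derivative `P_{(p,v)}(e,h,b) = d/dt|₀ Γ_{(p,v+tb)}(e,h)` of an
anisotropic connection. -/
noncomputable def vertDeriv {E : Type*} [NormedAddCommGroup E] [NormedSpace ℝ E]
    (Γ : E × E → E →ₗ[ℝ] E →ₗ[ℝ] E) (pv : E × E) (e h b : E) : E :=
  deriv (fun t : ℝ => Γ (pv.1, pv.2 + t • b) e h) 0

section Helpers

variable {E F G : Type*} [NormedAddCommGroup E] [NormedSpace ℝ E]
  [NormedAddCommGroup F] [NormedSpace ℝ F] [NormedAddCommGroup G] [NormedSpace ℝ G]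

theorem line_hasDerivAt (u b : E) : HasDerivAt (fun t : ℝ => u + t • b) b 0 := by
  simpa using ((hasDerivAt_id (0:ℝ)).smul_const b).const_add u

theorem curve_hasDerivAt (p : F) (u b : E) :
    HasDerivAt (fun t : ℝ => ((p, u + t • b) : F × E)) ((0 : F), b) 0 :=
  HasDerivAt.prodMk (hasDerivAt_const (0:ℝ) p) (line_hasDerivAt u b)

theorem compLine_hasDerivAt {f : F × E → G} (z : F × E) (hf : DifferentiableAt ℝ f z) (b : E) :
    HasDerivAt (fun t : ℝ => f (z.1, z.2 + t • b)) (fderiv ℝ f z ((0 : F), b)) 0 := by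
  have hf' : HasFDerivAt f (fderiv ℝ f z) (z.1, z.2 + (0:ℝ) • b) := by
    simpa using hf.hasFDerivAt
  exact hf'.comp_hasDerivAt 0 (curve_hasDerivAt z.1 z.2 b)

theorem basePartial_fderiv {f : E × F → G} (z : E × F) (hf : DifferentiableAt ℝ f z) (e : E) :
    fderiv ℝ (fun q => f (q, z.2)) z.1 e = fderiv ℝ f z (e, 0) := by
  have hg : HasFDerivAt (fun q : E => (q, z.2)) ((ContinuousLinearMap.id ℝ E).prod 0) z.1 :=
    HasFDerivAt.prodMk (hasFDerivAt_id z.1) (hasFDerivAt_const z.2 z.1)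
  have h1 : HasFDerivAt (fun q => f (q, z.2))
      ((fderiv ℝ f z).comp ((ContinuousLinearMap.id ℝ E).prod 0)) z.1 :=
    hf.hasFDerivAt.comp z.1 hg
  rw [h1.fderiv]
  simp

end Helpers

theorem gmap_contDiffOn {n : ℕ}
    {A : Set (EuclideanSpace ℝ (Fin n) × EuclideanSpace ℝ (Fin n))}
    (Γ : EuclideanSpace ℝ (Fin n) × EuclideanSpace ℝ (Fin n) →
      EuclideanSpace ℝ (Fin n) →ₗ[ℝ] EuclideanSpace ℝ (Fin n) →ₗ[ℝ] EuclideanSpace ℝ (Fin n))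
    (e : EuclideanSpace ℝ (Fin n))
    (hΓ : ∀ e h : EuclideanSpace ℝ (Fin n),
      ContDiffOn ℝ (⊤ : ℕ∞) (fun pv => Γ pv e h) A) :
    ContDiffOn ℝ (⊤ : ℕ∞)
      (fun z : (EuclideanSpace ℝ (Fin n) × EuclideanSpace ℝ (Fin n)) × EuclideanSpace ℝ (Fin n)
        => Γ z.1 e z.2) (A ×ˢ Set.univ) := by
  classical
  have hrep : ∀ z : (EuclideanSpace ℝ (Fin n) × EuclideanSpace ℝ (Fin n)) ×
      EuclideanSpace ℝ (Fin n),
      Γ z.1 e z.2 = ∑ i : Fin n, z.2 i • Γ z.1 e (EuclideanSpace.single i 1) := by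
    intro z
    conv_lhs => rw [← (EuclideanSpace.basisFun (Fin n) ℝ).toBasis.sum_repr z.2]
    rw [map_sum]
    refine Finset.sum_congr rfl fun i _ => ?_
    rw [map_smul]
    simp [OrthonormalBasis.coe_toBasis_repr_apply, EuclideanSpace.basisFun_repr,
      OrthonormalBasis.coe_toBasis, EuclideanSpace.basisFun_apply]
  refine ContDiffOn.congr ?_ (fun z _ => hrep z)
  refine ContDiffOn.sum fun i _ => ContDiffOn.fun_smul ?_ ?_
  · exact ((EuclideanSpace.proj i : EuclideanSpace ℝ (Fin n) →L[ℝ] ℝ).contDiff.comp contDiff_snd).contDiffOn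
  · exact (hΓ e _).comp contDiff_fst.contDiffOn (fun z hz => hz.1)

theorem stmt10_aux {E : Type*} [NormedAddCommGroup E] [NormedSpace ℝ E]
    (A : Set (E × E)) (hA : IsOpen A)
    (Γ : E × E → E →ₗ[ℝ] E →ₗ[ℝ] E) (𝒳 : E × E → E)
    (h𝒳 : ContDiffOn ℝ (⊤ : ℕ∞) 𝒳 A)
    (p v : E) (hpv : (p, v) ∈ A) (e h : E)
    (hG : ContDiffOn ℝ (⊤ : ℕ∞) (fun z : (E × E) × E => Γ z.1 e z.2) (A ×ˢ Set.univ)) :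
    deriv (fun t : ℝ => covDeriv Γ 𝒳 (p, v + t • h) e) 0
      = vertDeriv Γ (p, v) e (𝒳 (p, v)) h
        + (covDeriv Γ (fun qu => fiberDeriv 𝒳 qu h) (p, v) e
            - fiberDeriv 𝒳 (p, v) (Γ (p, v) e h))
        - fiberDeriv 𝒳 (p, v) (vertDeriv Γ (p, v) e v h) := by
  have hmem : A ∈ nhds (p, v) := hA.mem_nhds hpv
  have hXdOn : ∀ qu ∈ A, DifferentiableAt ℝ 𝒳 qu := fun qu hqu =>
    (h𝒳.contDiffAt (hA.mem_nhds hqu)).differentiableAt (by simp)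
  have hXd : DifferentiableAt ℝ 𝒳 (p, v) := hXdOn _ hpv
  have hDon : ContDiffOn ℝ (⊤ : ℕ∞) (fderiv ℝ 𝒳) A :=
    h𝒳.fderiv_of_isOpen hA (by exact_mod_cast le_top)
  have hDat : DifferentiableAt ℝ (fderiv ℝ 𝒳) (p, v) :=
    (hDon.contDiffAt hmem).differentiableAt (by simp)
  have hsymm : ∀ a b : E × E, fderiv ℝ (fderiv ℝ 𝒳) (p, v) a b
      = fderiv ℝ (fderiv ℝ 𝒳) (p, v) b a :=
    fun a b => (h𝒳.contDiffAt hmem).isSymmSndFDerivAt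
      (by simp; exact WithTop.coe_le_coe.mpr (le_top : (2:ℕ∞) ≤ ⊤)) a b
  -- eventual membership along fiber lines
  have hevline : ∀ b : E, ∀ᶠ t : ℝ in nhds 0, (p, v + t • b) ∈ A := by
    intro b
    have hc : ContinuousAt (fun t : ℝ => ((p, v + t • b) : E × E)) 0 := by fun_prop
    have h0 : A ∈ nhds ((fun t : ℝ => ((p, v + t • b) : E × E)) 0) := by simpa using hmem
    exact hc.preimage_mem_nhds h0
  have hqev : ∀ᶠ q in nhds p, (q, v) ∈ A := by
    have hc : ContinuousAt (fun q : E => ((q, v) : E × E)) p := by fun_prop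
    exact hc.preimage_mem_nhds hmem
  -- fiber derivative as fderiv
  have hfib : ∀ qu ∈ A, ∀ b : E, fiberDeriv 𝒳 qu b = fderiv ℝ 𝒳 qu ((0 : E), b) :=
    fun qu hqu b => (compLine_hasDerivAt qu (hXdOn qu hqu) b).deriv
  -- differentiability of the G and H maps
  have hGd : ∀ x : E, DifferentiableAt ℝ (fun z : (E × E) × E => Γ z.1 e z.2) ((p, v), x) :=
    fun x => ((hG.contDiffAt ((hA.prod isOpen_univ).mem_nhds ⟨hpv, trivial⟩)).differentiableAt
      (by simp))
  have hHd : ∀ x : E, DifferentiableAt ℝ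
      (fun z : (E × E) × E => fderiv ℝ 𝒳 z.1 ((0 : E), z.2)) ((p, v), x) := fun x =>
    DifferentiableAt.clm_apply (c := fun z : (E × E) × E => fderiv ℝ 𝒳 z.1)
      (u := fun z : (E × E) × E => ((0 : E), z.2))
      (hDat.comp (((p, v), x) : (E × E) × E) differentiableAt_fst)
      (DifferentiableAt.prodMk (differentiableAt_const _) differentiableAt_snd)
  -- linear-slot derivative of G
  have hGlin : ∀ x₀ w : E, fderiv ℝ (fun z : (E × E) × E => Γ z.1 e z.2) ((p, v), x₀)
      ((0 : E × E), w) = Γ (p, v) e w := by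
    intro x₀ w
    have h1 := compLine_hasDerivAt (f := fun z : (E × E) × E => Γ z.1 e z.2)
      ((p, v), x₀) (hGd x₀) w
    have h2 : HasDerivAt (fun t : ℝ => Γ (p, v) e x₀ + t • Γ (p, v) e w) (Γ (p, v) e w) 0 :=
      line_hasDerivAt _ _
    have h3 : HasDerivAt (fun t : ℝ => Γ (p, v) e x₀ + t • Γ (p, v) e w)
        (fderiv ℝ (fun z : (E × E) × E => Γ z.1 e z.2) ((p, v), x₀) ((0 : E × E), w)) 0 :=
      h1.congr_of_eventuallyEq (Filter.Eventually.of_forall fun t => by simp)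
    exact h3.unique h2
  -- vertical-slot derivative of G
  have hGvert : ∀ x₀ : E, fderiv ℝ (fun z : (E × E) × E => Γ z.1 e z.2) ((p, v), x₀)
      ((((0 : E), h) : E × E), (0 : E)) = vertDeriv Γ (p, v) e x₀ h := by
    intro x₀
    have hc : HasDerivAt (fun t : ℝ => ((((p, v + t • h) : E × E), x₀) : (E × E) × E))
        (((((0 : E), h) : E × E), (0 : E)) : (E × E) × E) 0 :=
      (curve_hasDerivAt p v h).prodMk (hasDerivAt_const 0 x₀)
    have hf' : HasFDerivAt (fun z : (E × E) × E => Γ z.1 e z.2)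
        (fderiv ℝ (fun z : (E × E) × E => Γ z.1 e z.2) ((p, v), x₀))
        ((p, v + (0:ℝ) • h), x₀) := by simpa using (hGd x₀).hasFDerivAt
    have h1 : HasDerivAt (fun t : ℝ => Γ (p, v + t • h) e x₀)
        (fderiv ℝ (fun z : (E × E) × E => Γ z.1 e z.2) ((p, v), x₀)
          ((((0 : E), h) : E × E), (0 : E))) 0 := hf'.comp_hasDerivAt (l := fun z : (E × E) × E => Γ z.1 e z.2) 0 hc
    exact h1.deriv.symm
  -- the H map and its slot derivatives
  have hHlin : ∀ x₀ w : E, fderiv ℝ (fun z : (E × E) × E => fderiv ℝ 𝒳 z.1 ((0 : E), z.2))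
      ((p, v), x₀) ((0 : E × E), w) = fderiv ℝ 𝒳 (p, v) ((0 : E), w) := by
    intro x₀ w
    have h1 := compLine_hasDerivAt (f := fun z : (E × E) × E => fderiv ℝ 𝒳 z.1 ((0 : E), z.2))
      ((p, v), x₀) (hHd x₀) w
    have h2 : HasDerivAt
        (fun t : ℝ => fderiv ℝ 𝒳 (p, v) ((0 : E), x₀) + t • fderiv ℝ 𝒳 (p, v) ((0 : E), w))
        (fderiv ℝ 𝒳 (p, v) ((0 : E), w)) 0 := line_hasDerivAt _ _
    have h3 : HasDerivAt
        (fun t : ℝ => fderiv ℝ 𝒳 (p, v) ((0 : E), x₀) + t • fderiv ℝ 𝒳 (p, v) ((0 : E), w))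
        (fderiv ℝ (fun z : (E × E) × E => fderiv ℝ 𝒳 z.1 ((0 : E), z.2)) ((p, v), x₀)
          ((0 : E × E), w)) 0 := by
      refine h1.congr_of_eventuallyEq (Filter.Eventually.of_forall fun t => ?_)
      show fderiv ℝ 𝒳 (p, v) ((0 : E), x₀) + t • fderiv ℝ 𝒳 (p, v) ((0 : E), w)
        = fderiv ℝ 𝒳 (p, v) ((0 : E), x₀ + t • w)
      rw [show ((0 : E), x₀ + t • w) = ((0 : E), x₀) + t • ((0 : E), w) by simp,
        map_add, map_smul]
    exact h3.unique h2
  -- derivative along the fiber line of the applied first fderiv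
  have happ : ∀ b : E, ∀ w : E × E,
      HasDerivAt (fun t : ℝ => fderiv ℝ 𝒳 (p, v + t • b) w)
        (fderiv ℝ (fderiv ℝ 𝒳) (p, v) ((0 : E), b) w) 0 := by
    intro b w
    simpa using (compLine_hasDerivAt ((p, v) : E × E) hDat b).clm_apply (hasDerivAt_const 0 w)
  have hHfirst : ∀ x₀ : E, fderiv ℝ (fun z : (E × E) × E => fderiv ℝ 𝒳 z.1 ((0 : E), z.2))
      ((p, v), x₀) ((((0 : E), h) : E × E), (0 : E))
      = fderiv ℝ (fderiv ℝ 𝒳) (p, v) ((0 : E), h) ((0 : E), x₀) := by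
    intro x₀
    have hf' : HasFDerivAt (fun z : (E × E) × E => fderiv ℝ 𝒳 z.1 ((0 : E), z.2))
        (fderiv ℝ (fun z : (E × E) × E => fderiv ℝ 𝒳 z.1 ((0 : E), z.2)) ((p, v), x₀))
        ((p, v + (0:ℝ) • h), x₀) := by simpa using (hHd x₀).hasFDerivAt
    have hα : HasDerivAt (fun t : ℝ => fderiv ℝ 𝒳 (p, v + t • h) ((0 : E), x₀))
        (fderiv ℝ (fun z : (E × E) × E => fderiv ℝ 𝒳 z.1 ((0 : E), z.2)) ((p, v), x₀)
          ((((0 : E), h) : E × E), (0 : E))) 0 :=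
      hf'.comp_hasDerivAt (l := fun z : (E × E) × E => fderiv ℝ 𝒳 z.1 ((0 : E), z.2)) 0 ((curve_hasDerivAt p v h).prodMk (hasDerivAt_const 0 x₀))
    exact hα.unique (happ h ((0 : E), x₀))
  -- == term 1 ==
  have h1 : HasDerivAt (fun t : ℝ => fderiv ℝ (fun q => 𝒳 (q, v + t • h)) p e)
      (fderiv ℝ (fderiv ℝ 𝒳) (p, v) ((0 : E), h) (e, (0 : E))) 0 := by
    refine (happ h (e, (0 : E))).congr_of_eventuallyEq ?_
    filter_upwards [hevline h] with t ht
    exact basePartial_fderiv ((p, v + t • h) : E × E) (hXdOn _ ht) e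
  -- == term 2 ==
  have hGf' : HasFDerivAt (fun z : (E × E) × E => Γ z.1 e z.2)
      (fderiv ℝ (fun z : (E × E) × E => Γ z.1 e z.2) ((p, v), 𝒳 (p, v)))
      ((p, v + (0:ℝ) • h), 𝒳 (p, v + (0:ℝ) • h)) := by
    simpa using (hGd (𝒳 (p, v))).hasFDerivAt
  have h2 : HasDerivAt (fun t : ℝ => Γ (p, v + t • h) e (𝒳 (p, v + t • h)))
      (fderiv ℝ (fun z : (E × E) × E => Γ z.1 e z.2) ((p, v), 𝒳 (p, v))
        ((((0 : E), h) : E × E), fderiv ℝ 𝒳 (p, v) ((0 : E), h))) 0 :=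
    hGf'.comp_hasDerivAt (l := fun z : (E × E) × E => Γ z.1 e z.2) 0
      ((curve_hasDerivAt p v h).prodMk (compLine_hasDerivAt ((p, v) : E × E) hXd h))
  have h2v : fderiv ℝ (fun z : (E × E) × E => Γ z.1 e z.2) ((p, v), 𝒳 (p, v))
      ((((0 : E), h) : E × E), fderiv ℝ 𝒳 (p, v) ((0 : E), h))
      = vertDeriv Γ (p, v) e (𝒳 (p, v)) h + Γ (p, v) e (fderiv ℝ 𝒳 (p, v) ((0 : E), h)) := by
    rw [show (((((0 : E), h) : E × E), fderiv ℝ 𝒳 (p, v) ((0 : E), h)) : (E × E) × E)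
        = (((((0 : E), h) : E × E), (0 : E)) : (E × E) × E)
          + (((0 : E × E), fderiv ℝ 𝒳 (p, v) ((0 : E), h)) : (E × E) × E) by simp,
      map_add, hGvert (𝒳 (p, v)), hGlin (𝒳 (p, v))]
  rw [h2v] at h2
  -- == term 3 ==
  have hGf1 : HasFDerivAt (fun z : (E × E) × E => Γ z.1 e z.2)
      (fderiv ℝ (fun z : (E × E) × E => Γ z.1 e z.2) ((p, v), v))
      ((p, v + (0:ℝ) • h), v + (0:ℝ) • h) := by
    simpa using (hGd v).hasFDerivAt
  have hw : HasDerivAt (fun t : ℝ => Γ (p, v + t • h) e (v + t • h))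
      (fderiv ℝ (fun z : (E × E) × E => Γ z.1 e z.2) ((p, v), v)
        ((((0 : E), h) : E × E), h)) 0 :=
    hGf1.comp_hasDerivAt (l := fun z : (E × E) × E => Γ z.1 e z.2) 0 ((curve_hasDerivAt p v h).prodMk (line_hasDerivAt v h))
  have hwv : fderiv ℝ (fun z : (E × E) × E => Γ z.1 e z.2) ((p, v), v)
      ((((0 : E), h) : E × E), h) = vertDeriv Γ (p, v) e v h + Γ (p, v) e h := by
    rw [show ((((((0 : E), h) : E × E), h)) : (E × E) × E)
        = (((((0 : E), h) : E × E), (0 : E)) : (E × E) × E)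
          + (((0 : E × E), h) : (E × E) × E) by simp,
      map_add, hGvert v, hGlin v h]
  rw [hwv] at hw
  have hHf' : HasFDerivAt (fun z : (E × E) × E => fderiv ℝ 𝒳 z.1 ((0 : E), z.2))
      (fderiv ℝ (fun z : (E × E) × E => fderiv ℝ 𝒳 z.1 ((0 : E), z.2)) ((p, v), Γ (p, v) e v))
      ((p, v + (0:ℝ) • h), Γ (p, v + (0:ℝ) • h) e (v + (0:ℝ) • h)) := by
    simpa using (hHd (Γ (p, v) e v)).hasFDerivAt
  have h3' : HasDerivAt
      (fun t : ℝ => fderiv ℝ 𝒳 (p, v + t • h) ((0 : E), Γ (p, v + t • h) e (v + t • h)))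
      (fderiv ℝ (fun z : (E × E) × E => fderiv ℝ 𝒳 z.1 ((0 : E), z.2)) ((p, v), Γ (p, v) e v)
        ((((0 : E), h) : E × E), vertDeriv Γ (p, v) e v h + Γ (p, v) e h)) 0 :=
    hHf'.comp_hasDerivAt (l := fun z : (E × E) × E => fderiv ℝ 𝒳 z.1 ((0 : E), z.2)) 0 ((curve_hasDerivAt p v h).prodMk hw)
  have h3 : HasDerivAt
      (fun t : ℝ => fiberDeriv 𝒳 (p, v + t • h) (Γ (p, v + t • h) e (v + t • h)))
      (fderiv ℝ (fun z : (E × E) × E => fderiv ℝ 𝒳 z.1 ((0 : E), z.2)) ((p, v), Γ (p, v) e v)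
        ((((0 : E), h) : E × E), vertDeriv Γ (p, v) e v h + Γ (p, v) e h)) 0 := by
    refine h3'.congr_of_eventuallyEq ?_
    filter_upwards [hevline h] with t ht
    exact hfib _ ht _
  have h3v : fderiv ℝ (fun z : (E × E) × E => fderiv ℝ 𝒳 z.1 ((0 : E), z.2))
      ((p, v), Γ (p, v) e v)
      ((((0 : E), h) : E × E), vertDeriv Γ (p, v) e v h + Γ (p, v) e h)
      = fderiv ℝ (fderiv ℝ 𝒳) (p, v) ((0 : E), h) ((0 : E), Γ (p, v) e v)
        + (fderiv ℝ 𝒳 (p, v) ((0 : E), vertDeriv Γ (p, v) e v h)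
          + fderiv ℝ 𝒳 (p, v) ((0 : E), Γ (p, v) e h)) := by
    rw [show (((((0 : E), h) : E × E), vertDeriv Γ (p, v) e v h + Γ (p, v) e h) : (E × E) × E)
        = (((((0 : E), h) : E × E), (0 : E)) : (E × E) × E)
          + ((((0 : E × E), vertDeriv Γ (p, v) e v h) : (E × E) × E)
            + (((0 : E × E), Γ (p, v) e h) : (E × E) × E)) by simp,
      map_add, map_add, hHfirst, hHlin, hHlin]
  rw [h3v] at h3
  -- == assemble the left-hand side ==
  have hsum := (h1.add h2).sub h3
  have hL : deriv (fun t : ℝ => covDeriv Γ 𝒳 (p, v + t • h) e) 0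
      = fderiv ℝ (fderiv ℝ 𝒳) (p, v) ((0 : E), h) (e, (0 : E))
        + (vertDeriv Γ (p, v) e (𝒳 (p, v)) h + Γ (p, v) e (fderiv ℝ 𝒳 (p, v) ((0 : E), h)))
        - (fderiv ℝ (fderiv ℝ 𝒳) (p, v) ((0 : E), h) ((0 : E), Γ (p, v) e v)
          + (fderiv ℝ 𝒳 (p, v) ((0 : E), vertDeriv Γ (p, v) e v h)
            + fderiv ℝ 𝒳 (p, v) ((0 : E), Γ (p, v) e h))) :=
    HasDerivAt.deriv hsum
  -- == right-hand side pieces ==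
  have hR1 : fderiv ℝ (fun q => fiberDeriv 𝒳 (q, v) h) p e
      = fderiv ℝ (fderiv ℝ 𝒳) (p, v) ((0 : E), h) (e, (0 : E)) := by
    have hEq : (fun q => fiberDeriv 𝒳 (q, v) h)
        =ᶠ[nhds p] fun q => fderiv ℝ 𝒳 (q, v) ((0 : E), h) := by
      filter_upwards [hqev] with q hq
      exact hfib _ hq h
    rw [hEq.fderiv_eq]
    have hc : HasFDerivAt (fun q : E => fderiv ℝ 𝒳 (q, v))
        ((fderiv ℝ (fderiv ℝ 𝒳) (p, v)).comp ((ContinuousLinearMap.id ℝ E).prod 0)) p :=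
      hDat.hasFDerivAt.comp p (HasFDerivAt.prodMk (hasFDerivAt_id p) (hasFDerivAt_const v p))
    have h4 := hc.clm_apply (hasFDerivAt_const ((0 : E), h) p)
    rw [h4.fderiv]
    simp [hsymm (e, (0 : E)) ((0 : E), h)]
  have hR3 : fiberDeriv (fun qu => fiberDeriv 𝒳 qu h) (p, v) (Γ (p, v) e v)
      = fderiv ℝ (fderiv ℝ 𝒳) (p, v) ((0 : E), h) ((0 : E), Γ (p, v) e v) := by
    have h5 : HasDerivAt (fun t : ℝ => fiberDeriv 𝒳 (p, v + t • Γ (p, v) e v) h)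
        (fderiv ℝ (fderiv ℝ 𝒳) (p, v) ((0 : E), Γ (p, v) e v) ((0 : E), h)) 0 := by
      refine (happ (Γ (p, v) e v) ((0 : E), h)).congr_of_eventuallyEq ?_
      filter_upwards [hevline (Γ (p, v) e v)] with t ht
      exact hfib _ ht h
    exact h5.deriv.trans (hsymm _ _)
  -- == conclude ==
  rw [hL]
  have hcov : covDeriv Γ (fun qu => fiberDeriv 𝒳 qu h) (p, v) e
      = fderiv ℝ (fderiv ℝ 𝒳) (p, v) ((0 : E), h) (e, (0 : E))
        + Γ (p, v) e (fderiv ℝ 𝒳 (p, v) ((0 : E), h))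
        - fderiv ℝ (fderiv ℝ 𝒳) (p, v) ((0 : E), h) ((0 : E), Γ (p, v) e v) := by
    show fderiv ℝ (fun q => fiberDeriv 𝒳 (q, v) h) p e
        + Γ (p, v) e (fiberDeriv 𝒳 (p, v) h)
        - fiberDeriv (fun qu => fiberDeriv 𝒳 qu h) (p, v) (Γ (p, v) e v) = _
    rw [hR1, hR3, hfib _ hpv h]
  rw [hcov, hfib _ hpv (Γ (p, v) e h), hfib _ hpv (vertDeriv Γ (p, v) e v h)]
  abel


/-- for every smooth anisotropic vector field `𝒳`, every `(p,v) ∈ A` and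
all `e,h`, the fiber derivative of the covariant derivative satisfies
`d/dt|₀ ∇^{(p,v+th)}_e 𝒳 = P_{(p,v)}(e,𝒳(p,v),h) + (∇_e(∂̇𝒳))_{(p,v)}(h)
  − (∂̇𝒳)_{(p,v)}(P_{(p,v)}(e,v,h))`, where
`(∇_e(∂̇𝒳))_{(p,v)}(h) = ∇^{(p,v)}_e[(q,u) ↦ (∂̇𝒳)_{(q,u)}(h)] − (∂̇𝒳)_{(p,v)}(Γ_{(p,v)}(e,h))`. -/
theorem stmt10 (n : ℕ)
    (F : PseudoFinslerChart (EuclideanSpace ℝ (Fin n)))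
    (Γ : EuclideanSpace ℝ (Fin n) × EuclideanSpace ℝ (Fin n) →
      EuclideanSpace ℝ (Fin n) →ₗ[ℝ] EuclideanSpace ℝ (Fin n) →ₗ[ℝ] EuclideanSpace ℝ (Fin n))
    (hΓ : ∀ e h : EuclideanSpace ℝ (Fin n),
      ContDiffOn ℝ (⊤ : ℕ∞) (fun pv => Γ pv e h) F.A)
    (𝒳 : EuclideanSpace ℝ (Fin n) × EuclideanSpace ℝ (Fin n) → EuclideanSpace ℝ (Fin n))
    (h𝒳 : ContDiffOn ℝ (⊤ : ℕ∞) 𝒳 F.A) :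
    ∀ p v, (p, v) ∈ F.A → ∀ e h : EuclideanSpace ℝ (Fin n),
      deriv (fun t : ℝ => covDeriv Γ 𝒳 (p, v + t • h) e) 0
        = vertDeriv Γ (p, v) e (𝒳 (p, v)) h
          + (covDeriv Γ (fun qu => fiberDeriv 𝒳 qu h) (p, v) e
              - fiberDeriv 𝒳 (p, v) (Γ (p, v) e h))
          - fiberDeriv 𝒳 (p, v) (vertDeriv Γ (p, v) e v h) := by
  intro p v hpv e h
  exact stmt10_aux F.A F.A_open Γ 𝒳 h𝒳 p v hpv e h (gmap_contDiffOn Γ e hΓ)
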